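/- Tightened value-function cut, separation (second part of Lemma 2 of the paper): let (y′,z*) be a bilevel feasible pair, let Φ_tight be the tightened value-function bound of z*, and let z′ ∈ 𝒮 satisfy π^F(y′,z′) < π^F(y′,z*) (i.e., (y′,z′) is integer feasible but bilevel infeasible). Then π^F(y′,z′) < Φ_tight(y′); that is, the pair (y′,z′) violates the tightened value-function cut. -/

import Mathlib

open Finset

attribute [local instance] Classical.propDecidable

/-- Data of an instance of the competitive dynamic facility location problem under
cumulative customer demand (CDFLP-CCD).  `pref j a b` means that customer `j`
strictly prefers option `a` over option `b`, where `none` is the no-service option. -/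
structure CDFLP (I J : Type*) where
  /-- number of time periods; the period set is `{1, …, T}` -/
  T : ℕ
  /-- spawning demand of customer `j` at period `t` -/
  d : J → ℕ → ℝ
  /-- reward per unit of demand captured at location `i` -/
  r : I → ℝ
  /-- splitting factor -/
  ρ : ℝ
  /-- strict preference: `pref j a b` means `a ≻_j b` -/
  pref : J → Option I → Option I → Prop

namespace CDFLP

variable {I J : Type*} [Fintype I] [Fintype J]

/-- The model hypotheses: `T ≥ 1`, nonnegative demands and rewards, `ρ ∈ [0,1]`,
and every `≻_j` is a strict linear order on `I ∪ {0}`. -/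
def Valid (P : CDFLP I J) : Prop :=
  1 ≤ P.T ∧ (∀ j t, 0 ≤ P.d j t) ∧ (∀ i, 0 ≤ P.r i) ∧
    0 ≤ P.ρ ∧ P.ρ ≤ 1 ∧ ∀ j, IsStrictTotalOrder (Option I) (P.pref j)

/-- The locations considered by customer `j`, i.e. those preferred over no service. -/
noncomputable def considered (P : CDFLP I J) (j : J) : Finset I :=
  Finset.univ.filter fun i => P.pref j (some i) none

/-- `w` is a location schedule: on the planning horizon it is `{0,1}`-valued and opens
at most one facility per period. -/
def IsSched (P : CDFLP I J) (w : I → ℕ → ℝ) : Prop :=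
  ∀ t, 1 ≤ t → t ≤ P.T → (∀ i, w i t = 0 ∨ w i t = 1) ∧ (∑ i, w i t) ≤ 1

/-- `A_j^t(y,z)`: considered locations of `j` opened by the leader or the follower
at period `t`. -/
noncomputable def captureSet (P : CDFLP I J) (y z : I → ℕ → ℝ) (j : J) (t : ℕ) : Finset I :=
  Finset.univ.filter fun i => P.pref j (some i) none ∧ (y i t = 1 ∨ z i t = 1)

/-- `t ∈ 𝒯` is a capture period of customer `j`. -/
def IsCapture (P : CDFLP I J) (y z : I → ℕ → ℝ) (j : J) (t : ℕ) : Prop :=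
  1 ≤ t ∧ t ≤ P.T ∧ (P.captureSet y z j t).Nonempty

/-- `i` is the `≻_j`-greatest element of the capture set `A_j^t(y,z)`,
i.e. `i = i*(j,t)`. -/
def IsPatron (P : CDFLP I J) (y z : I → ℕ → ℝ) (j : J) (t : ℕ) (i : I) : Prop :=
  i ∈ P.captureSet y z j t ∧
    ∀ k ∈ P.captureSet y z j t, k ≠ i → P.pref j (some i) (some k)

/-- The greatest capture period of `j` smaller than `t` (`0` if there is none). -/
noncomputable def lastCap (P : CDFLP I J) (y z : I → ℕ → ℝ) (j : J) (t : ℕ) : ℕ :=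
  ((Finset.Ico 1 t).filter fun s => P.IsCapture y z j s).sup id

/-- `D_j^{ℓt}`: demand of customer `j` spawned in periods `ℓ+1, …, t`. -/
noncomputable def D (P : CDFLP I J) (j : J) (ℓ t : ℕ) : ℝ :=
  ∑ s ∈ Finset.Icc (ℓ + 1) t, P.d j s

/-- `v_{ij}^{ℓt}(y,z)`: fraction of `D_j^{ℓt}` captured by the follower through
location `i` at period `t`. -/
noncomputable def v (P : CDFLP I J) (y z : I → ℕ → ℝ) (j : J) (i : I) (ℓ t : ℕ) : ℝ :=
  if P.IsCapture y z j t ∧ ℓ = P.lastCap y z j t ∧ P.IsPatron y z j t i ∧ z i t = 1 then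
    1 - P.ρ * y i t
  else 0

/-- `u_{ij}^{ℓt}(y,z)`: fraction of `D_j^{ℓt}` captured by the leader through
location `i` at period `t`. -/
noncomputable def u (P : CDFLP I J) (y z : I → ℕ → ℝ) (j : J) (i : I) (ℓ t : ℕ) : ℝ :=
  if P.IsCapture y z j t ∧ ℓ = P.lastCap y z j t ∧ P.IsPatron y z j t i ∧ y i t = 1 then
    1 - (1 - P.ρ) * z i t
  else 0

/-- The follower's profit `π^F(y,z)`. -/
noncomputable def profitF (P : CDFLP I J) (y z : I → ℕ → ℝ) : ℝ :=
  ∑ t ∈ Finset.Icc 1 P.T, ∑ ℓ ∈ Finset.range t, ∑ j : J, ∑ i ∈ P.considered j,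
    P.r i * P.D j ℓ t * P.v y z j i ℓ t

/-- The leader's profit `π^L(y,z)`. -/
noncomputable def profitL (P : CDFLP I J) (y z : I → ℕ → ℝ) : ℝ :=
  ∑ t ∈ Finset.Icc 1 P.T, ∑ ℓ ∈ Finset.range t, ∑ j : J, ∑ i ∈ P.considered j,
    P.r i * P.D j ℓ t * P.u y z j i ℓ t

/-- `(y,z)` is bilevel feasible: both are schedules and `z` is an optimal
reaction of the follower against `y`. -/
def BilevelFeasible (P : CDFLP I J) (y z : I → ℕ → ℝ) : Prop :=
  P.IsSched y ∧ P.IsSched z ∧ ∀ z', P.IsSched z' → P.profitF y z' ≤ P.profitF y z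


/-- `o_{ij}^{st}(y)`: the maximum of the `y`-values at locations/periods through which
the leader can intercept the demand portion spawned at period `s` and captured at
period `t` through location `i`; the maximum of an empty set is taken as `0`. -/
noncomputable def oMax (P : CDFLP I J) (y : I → ℕ → ℝ) (j : J) (i : I) (s t : ℕ) : ℝ :=
  max ((Finset.Ico s t ×ˢ P.considered j).fold max 0 fun p => y p.2 p.1)
      ((Finset.univ.filter fun k => P.pref j (some k) (some i)).fold max 0 fun k => y k t)

/-- The tightened value-function bound of the follower schedule `zs`, evaluated at a
leader schedule `y` (the `v`-values are taken against the empty leader schedule). -/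
noncomputable def tightenedBound (P : CDFLP I J) (zs y : I → ℕ → ℝ) : ℝ :=
  ∑ t ∈ Finset.Icc 1 P.T, ∑ ℓ ∈ Finset.range t, ∑ j : J, ∑ i ∈ P.considered j,
    P.r i * P.v (fun _ _ => 0) zs j i ℓ t *
      (P.D j ℓ t - (∑ s ∈ Finset.Icc (ℓ + 1) t, P.d j s * P.oMax y j i s t)
        - P.ρ * y i t * ∑ s ∈ Finset.Icc (ℓ + 1) t, P.d j s * (1 - P.oMax y j i s t))

section Aux

lemma sched_le_one {P : CDFLP I J} {w : I → ℕ → ℝ} (hw : P.IsSched w) {t : ℕ}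
    (ht1 : 1 ≤ t) (ht2 : t ≤ P.T) (i : I) : w i t ≤ 1 := by
  rcases (hw t ht1 ht2).1 i with h | h <;> rw [h] <;> norm_num

lemma one_sub_rho_mul_nonneg {P : CDFLP I J} (hP : P.Valid) {w : I → ℕ → ℝ}
    (hw : P.IsSched w) {t : ℕ} (ht1 : 1 ≤ t) (ht2 : t ≤ P.T) (i : I) :
    0 ≤ 1 - P.ρ * w i t := by
  obtain ⟨-, -, -, hρ0, hρ1, -⟩ := hP
  rcases (hw t ht1 ht2).1 i with h | h <;> rw [h] <;> nlinarith

lemma captureSet_zero_subset {P : CDFLP I J} {z : I → ℕ → ℝ} (y : I → ℕ → ℝ) (j : J) (t : ℕ) :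
    P.captureSet (fun _ _ => 0) z j t ⊆ P.captureSet y z j t := by
  intro i hi
  rw [captureSet, Finset.mem_filter] at hi ⊢
  refine ⟨Finset.mem_univ _, hi.2.1, ?_⟩
  rcases hi.2.2 with h | h
  · norm_num at h
  · exact Or.inr h

lemma lastCap_lt {P : CDFLP I J} {y z : I → ℕ → ℝ} {j : J} {t : ℕ} (ht : 1 ≤ t) :
    P.lastCap y z j t < t := by
  rw [lastCap]
  exact (Finset.sup_lt_iff (show (⊥ : ℕ) < t from ht)).mpr
    (fun b hb => (Finset.mem_Ico.mp (Finset.mem_filter.mp hb).1).2)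

lemma le_lastCap {P : CDFLP I J} {y z : I → ℕ → ℝ} {j : J} {s t : ℕ}
    (hc : P.IsCapture y z j s) (hst : s < t) : s ≤ P.lastCap y z j t :=
  Finset.le_sup (f := id)
    (Finset.mem_filter.mpr ⟨Finset.mem_Ico.mpr ⟨hc.1, hst⟩, hc⟩)

lemma lastCap_zero_le {P : CDFLP I J} {y z : I → ℕ → ℝ} {j : J} {t : ℕ} :
    P.lastCap (fun _ _ => 0) z j t ≤ P.lastCap y z j t := by
  apply Finset.sup_mono
  apply Finset.monotone_filter_right
  rintro s - ⟨h1, h2, k, hk⟩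
  exact ⟨h1, h2, k, captureSet_zero_subset y j s hk⟩

lemma patron_unique {P : CDFLP I J} (hP : P.Valid) {y z : I → ℕ → ℝ} {j : J} {t : ℕ} {i k : I}
    (hi : P.IsPatron y z j t i) (hk : P.IsPatron y z j t k) : i = k := by
  by_contra hne
  haveI := hP.2.2.2.2.2 j
  exact irrefl_of (P.pref j) (some i)
    (trans_of (P.pref j) (hi.2 k hk.1 (Ne.symm hne)) (hk.2 i hi.1 hne))

lemma oMax_nonneg {P : CDFLP I J} {y : I → ℕ → ℝ} {j : J} {i : I} {s t : ℕ} :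
    0 ≤ P.oMax y j i s t :=
  le_max_of_le_left ((Finset.le_fold_max 0).mpr (Or.inl le_rfl))

lemma oMax_le_one {P : CDFLP I J} {y : I → ℕ → ℝ} (hy : P.IsSched y) {j : J} {i : I} {s t : ℕ}
    (hs : 1 ≤ s) (ht2 : t ≤ P.T) (ht1 : 1 ≤ t) : P.oMax y j i s t ≤ 1 := by
  rw [oMax]
  apply max_le
  · rw [Finset.fold_max_le]
    refine ⟨zero_le_one, ?_⟩
    rintro ⟨p, k⟩ hpk
    rw [Finset.mem_product, Finset.mem_Ico] at hpk
    exact sched_le_one hy (le_trans hs hpk.1.1) (le_trans (le_of_lt hpk.1.2) ht2) k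
  · rw [Finset.fold_max_le]
    exact ⟨zero_le_one, fun k _ => sched_le_one hy ht1 ht2 k⟩

lemma oMax_eq_zero {P : CDFLP I J} (hP : P.Valid) {y z : I → ℕ → ℝ} (hy : P.IsSched y)
    {j : J} {i : I} {s t : ℕ} (ht2 : t ≤ P.T) (hpat : P.IsPatron y z j t i)
    (hs : P.lastCap y z j t < s) (hst : s ≤ t) : P.oMax y j i s t = 0 := by
  haveI := hP.2.2.2.2.2 j
  refine le_antisymm ?_ oMax_nonneg
  rw [oMax]
  apply max_le
  · rw [Finset.fold_max_le]
    refine ⟨le_rfl, ?_⟩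
    rintro ⟨p, k⟩ hpk
    rw [Finset.mem_product, Finset.mem_Ico] at hpk
    obtain ⟨⟨hsp, hpt⟩, hk⟩ := hpk
    have hp1 : 1 ≤ p := by omega
    rcases (hy p hp1 (le_trans (le_of_lt hpt) ht2)).1 k with h | h
    · rw [h]
    · exfalso
      have hcap : P.IsCapture y z j p :=
        ⟨hp1, le_trans (le_of_lt hpt) ht2,
          ⟨k, Finset.mem_filter.mpr
            ⟨Finset.mem_univ _, (Finset.mem_filter.mp hk).2, Or.inl h⟩⟩⟩
      have := le_lastCap hcap hpt
      omega
  · rw [Finset.fold_max_le]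
    refine ⟨le_rfl, ?_⟩
    intro k hk
    have hpk : P.pref j (some k) (some i) := (Finset.mem_filter.mp hk).2
    have ht1 : 1 ≤ t := le_trans (by omega) hst
    rcases (hy t ht1 ht2).1 k with h | h
    · rw [h]
    · exfalso
      have hinone : P.pref j (some i) none := (Finset.mem_filter.mp hpat.1).2.1
      have hkc : k ∈ P.captureSet y z j t :=
        Finset.mem_filter.mpr
          ⟨Finset.mem_univ _, trans_of (P.pref j) hpk hinone, Or.inl h⟩
      have hne : k ≠ i := by
        rintro rfl; exact irrefl_of (P.pref j) _ hpk
      exact irrefl_of (P.pref j) _ (trans_of (P.pref j) hpk (hpat.2 k hkc hne))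

lemma bracket_eq (P : CDFLP I J) (y : I → ℕ → ℝ) (j : J) (i : I) (ℓ t : ℕ) :
    P.D j ℓ t - (∑ s ∈ Finset.Icc (ℓ + 1) t, P.d j s * P.oMax y j i s t)
      - P.ρ * y i t * ∑ s ∈ Finset.Icc (ℓ + 1) t, P.d j s * (1 - P.oMax y j i s t)
    = ∑ s ∈ Finset.Icc (ℓ + 1) t, P.d j s * (1 - P.oMax y j i s t) * (1 - P.ρ * y i t) := by
  rw [D, Finset.mul_sum, ← Finset.sum_sub_distrib, ← Finset.sum_sub_distrib]
  exact Finset.sum_congr rfl fun s _ => by ring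

lemma v_zero_nonneg {P : CDFLP I J} (hP : P.Valid) {z : I → ℕ → ℝ} {j : J} {i : I} {ℓ t : ℕ} :
    0 ≤ P.v (fun _ _ => 0) z j i ℓ t := by
  rw [v]
  split
  · norm_num
  · exact le_rfl

lemma tterm_nonneg {P : CDFLP I J} (hP : P.Valid) {y zs : I → ℕ → ℝ} (hy : P.IsSched y)
    {j : J} {i : I} {ℓ t : ℕ} (ht1 : 1 ≤ t) (ht2 : t ≤ P.T) :
    0 ≤ P.r i * P.v (fun _ _ => 0) zs j i ℓ t *
      (P.D j ℓ t - (∑ s ∈ Finset.Icc (ℓ + 1) t, P.d j s * P.oMax y j i s t)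
        - P.ρ * y i t * ∑ s ∈ Finset.Icc (ℓ + 1) t, P.d j s * (1 - P.oMax y j i s t)) := by
  rw [bracket_eq]
  refine mul_nonneg (mul_nonneg (hP.2.2.1 i) (v_zero_nonneg hP)) (Finset.sum_nonneg ?_)
  intro s hs
  rw [Finset.mem_Icc] at hs
  have hs1 : 1 ≤ s := by omega
  have h1 : (0:ℝ) ≤ 1 - P.oMax y j i s t := by
    linarith [oMax_le_one (P := P) (j := j) (i := i) hy hs1 ht2 ht1]
  exact mul_nonneg (mul_nonneg (hP.2.1 j s) h1) (one_sub_rho_mul_nonneg hP hy ht1 ht2 i)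

lemma profitF_le_tightenedBound {P : CDFLP I J} (hP : P.Valid) {y zs : I → ℕ → ℝ}
    (hy : P.IsSched y) (hz : P.IsSched zs) :
    P.profitF y zs ≤ P.tightenedBound zs y := by
  rw [profitF, tightenedBound]
  apply Finset.sum_le_sum
  intro t ht
  rw [Finset.mem_Icc] at ht
  obtain ⟨ht1, ht2⟩ := ht
  conv_lhs => rw [Finset.sum_comm]
  conv_rhs => rw [Finset.sum_comm]
  apply Finset.sum_le_sum
  intro j _
  by_cases hA : ∃ i0, P.IsCapture y zs j t ∧ P.IsPatron y zs j t i0 ∧ zs i0 t = 1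
  · obtain ⟨i0, hcap, hpat, hz1⟩ := hA
    have hprefi0 : P.pref j (some i0) none := (Finset.mem_filter.mp hpat.1).2.1
    have hi0 : i0 ∈ P.considered j :=
      Finset.mem_filter.mpr ⟨Finset.mem_univ _, hprefi0⟩
    have hmem0 : i0 ∈ P.captureSet (fun _ _ => 0) zs j t :=
      Finset.mem_filter.mpr ⟨Finset.mem_univ _, hprefi0, Or.inr hz1⟩
    have hcap0 : P.IsCapture (fun _ _ => 0) zs j t := ⟨ht1, ht2, ⟨i0, hmem0⟩⟩
    have hpat0 : P.IsPatron (fun _ _ => 0) zs j t i0 :=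
      ⟨hmem0, fun k hk hne => hpat.2 k (captureSet_zero_subset y j t hk) hne⟩
    have hLHS : (∑ ℓ ∈ Finset.range t, ∑ i ∈ P.considered j,
          P.r i * P.D j ℓ t * P.v y zs j i ℓ t)
        = P.r i0 * P.D j (P.lastCap y zs j t) t * (1 - P.ρ * y i0 t) := by
      rw [Finset.sum_eq_single_of_mem (P.lastCap y zs j t)
        (Finset.mem_range.mpr (lastCap_lt ht1))]
      · rw [Finset.sum_eq_single_of_mem i0 hi0]
        · rw [v, if_pos ⟨hcap, rfl, hpat, hz1⟩]
        · intro i _ hne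
          rw [v, if_neg, mul_zero]
          rintro ⟨-, -, hp, -⟩
          exact hne (patron_unique hP hp hpat)
      · intro ℓ _ hne
        apply Finset.sum_eq_zero
        intro i _
        rw [v, if_neg, mul_zero]
        rintro ⟨-, hℓ', -, -⟩
        exact hne hℓ'
    have hv0 : P.v (fun _ _ => 0) zs j i0 (P.lastCap (fun _ _ => 0) zs j t) t = 1 := by
      rw [v, if_pos ⟨hcap0, rfl, hpat0, hz1⟩]
      norm_num
    have hRHS : P.r i0 * P.v (fun _ _ => 0) zs j i0 (P.lastCap (fun _ _ => 0) zs j t) t *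
          (P.D j (P.lastCap (fun _ _ => 0) zs j t) t
            - (∑ s ∈ Finset.Icc (P.lastCap (fun _ _ => 0) zs j t + 1) t,
                P.d j s * P.oMax y j i0 s t)
            - P.ρ * y i0 t * ∑ s ∈ Finset.Icc (P.lastCap (fun _ _ => 0) zs j t + 1) t,
                P.d j s * (1 - P.oMax y j i0 s t))
        ≤ ∑ ℓ ∈ Finset.range t, ∑ i ∈ P.considered j,
            P.r i * P.v (fun _ _ => 0) zs j i ℓ t *
              (P.D j ℓ t - (∑ s ∈ Finset.Icc (ℓ + 1) t, P.d j s * P.oMax y j i s t)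
                - P.ρ * y i t * ∑ s ∈ Finset.Icc (ℓ + 1) t,
                    P.d j s * (1 - P.oMax y j i s t)) := by
      refine le_trans (Finset.single_le_sum (f := fun i =>
          P.r i * P.v (fun _ _ => 0) zs j i (P.lastCap (fun _ _ => 0) zs j t) t *
            (P.D j (P.lastCap (fun _ _ => 0) zs j t) t
              - (∑ s ∈ Finset.Icc (P.lastCap (fun _ _ => 0) zs j t + 1) t,
                  P.d j s * P.oMax y j i s t)
              - P.ρ * y i t * ∑ s ∈ Finset.Icc (P.lastCap (fun _ _ => 0) zs j t + 1) t,
                  P.d j s * (1 - P.oMax y j i s t)))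
          (fun i _ => tterm_nonneg hP hy ht1 ht2) hi0) ?_
      exact Finset.single_le_sum (f := fun ℓ => ∑ i ∈ P.considered j,
          P.r i * P.v (fun _ _ => 0) zs j i ℓ t *
            (P.D j ℓ t - (∑ s ∈ Finset.Icc (ℓ + 1) t, P.d j s * P.oMax y j i s t)
              - P.ρ * y i t * ∑ s ∈ Finset.Icc (ℓ + 1) t,
                  P.d j s * (1 - P.oMax y j i s t)))
        (fun ℓ _ => Finset.sum_nonneg fun i _ => tterm_nonneg hP hy ht1 ht2)
        (Finset.mem_range.mpr (lastCap_lt ht1))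
    have hcore : P.D j (P.lastCap y zs j t) t * (1 - P.ρ * y i0 t)
        ≤ P.D j (P.lastCap (fun _ _ => 0) zs j t) t
            - (∑ s ∈ Finset.Icc (P.lastCap (fun _ _ => 0) zs j t + 1) t,
                P.d j s * P.oMax y j i0 s t)
            - P.ρ * y i0 t * ∑ s ∈ Finset.Icc (P.lastCap (fun _ _ => 0) zs j t + 1) t,
                P.d j s * (1 - P.oMax y j i0 s t) := by
      rw [bracket_eq]
      have hle : P.lastCap (fun _ _ => 0) zs j t ≤ P.lastCap y zs j t := lastCap_zero_le
      calc P.D j (P.lastCap y zs j t) t * (1 - P.ρ * y i0 t)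
          = ∑ s ∈ Finset.Icc (P.lastCap y zs j t + 1) t,
              P.d j s * (1 - P.oMax y j i0 s t) * (1 - P.ρ * y i0 t) := by
            rw [D, Finset.sum_mul]
            apply Finset.sum_congr rfl
            intro s hs
            rw [Finset.mem_Icc] at hs
            rw [oMax_eq_zero hP hy ht2 hpat (by omega) hs.2]
            ring
        _ ≤ ∑ s ∈ Finset.Icc (P.lastCap (fun _ _ => 0) zs j t + 1) t,
              P.d j s * (1 - P.oMax y j i0 s t) * (1 - P.ρ * y i0 t) := by
            apply Finset.sum_le_sum_of_subset_of_nonneg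
            · exact Finset.Icc_subset_Icc (by omega) le_rfl
            · intro s hs _
              rw [Finset.mem_Icc] at hs
              have hs1 : 1 ≤ s := by omega
              have h1 : (0:ℝ) ≤ 1 - P.oMax y j i0 s t := by
                linarith [oMax_le_one (P := P) (j := j) (i := i0) hy hs1 ht2 ht1]
              exact mul_nonneg (mul_nonneg (hP.2.1 j s) h1)
                (one_sub_rho_mul_nonneg hP hy ht1 ht2 i0)
    rw [hLHS]
    refine le_trans ?_ hRHS
    rw [hv0, mul_one]
    calc P.r i0 * P.D j (P.lastCap y zs j t) t * (1 - P.ρ * y i0 t)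
        = P.r i0 * (P.D j (P.lastCap y zs j t) t * (1 - P.ρ * y i0 t)) := by ring
      _ ≤ _ := mul_le_mul_of_nonneg_left hcore (hP.2.2.1 i0)
  · calc (∑ ℓ ∈ Finset.range t, ∑ i ∈ P.considered j,
          P.r i * P.D j ℓ t * P.v y zs j i ℓ t) = 0 := by
          apply Finset.sum_eq_zero
          intro ℓ _
          apply Finset.sum_eq_zero
          intro i _
          rw [v, if_neg, mul_zero]
          rintro ⟨h1, -, h3, h4⟩
          exact hA ⟨i, h1, h3, h4⟩
      _ ≤ _ := Finset.sum_nonneg fun ℓ _ =>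
          Finset.sum_nonneg fun i _ => tterm_nonneg hP hy ht1 ht2

end Aux

/-- **Lemma 2, separation.**  The tightened value-function cut built from a bilevel
feasible pair `(y', zs)` is violated by every integer-feasible but bilevel-infeasible
pair `(y', z')`. -/
theorem tightened_cut_separation (P : CDFLP I J) (hP : P.Valid)
    (y' zs : I → ℕ → ℝ) (hfeas : P.BilevelFeasible y' zs)
    (z' : I → ℕ → ℝ) (hz' : P.IsSched z')
    (hinf : P.profitF y' z' < P.profitF y' zs) :
    P.profitF y' z' < P.tightenedBound zs y' := by
  obtain ⟨hy, hz, -⟩ := hfeas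
  exact lt_of_lt_of_le hinf (profitF_le_tightenedBound hP hy hz)

end CDFLP
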